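/- Let (Ω, 𝓕, P) be a probability space and 𝓖 ⊆ 𝓕 a sub-σ-algebra. Let θ₁, …, θₙ be integrable real random variables, let θᵢ* = E[θᵢ | 𝓖] denote their conditional expectations, and let θ̂₁, …, θ̂ₙ be 𝓖-measurable real random variables such that each θ̂ᵢ − θᵢ* is square-integrable. Then E[(1/n) Σᵢ₌₁ⁿ (1{θᵢ* ≥ 0} − 1{θ̂ᵢ ≥ 0}) θᵢ] ≤ (E[(1/n) Σᵢ₌₁ⁿ (θ̂ᵢ − θᵢ*)²])^{1/2}. -/

import Mathlib

open MeasureTheory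

lemma ind_diff_mul_le (a b : ℝ) :
    ((if 0 ≤ a then (1:ℝ) else 0) - (if 0 ≤ b then (1:ℝ) else 0)) * a ≤ |b - a| := by
  rcases abs_cases (b - a) with h | h <;> split_ifs with h1 h2 h2 <;>
    linarith [h.1, h.2]

theorem utility_maximization_regret_le
    {Ω : Type*} [𝓕 : MeasurableSpace Ω] (μ : Measure Ω) [IsProbabilityMeasure μ]
    (𝓖 : MeasurableSpace Ω) (h𝓖 : 𝓖 ≤ 𝓕)
    (n : ℕ) (hn : 1 ≤ n)
    (θ : Fin n → Ω → ℝ) (hθ : ∀ i, Integrable (θ i) μ)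
    (θhat : Fin n → Ω → ℝ)
    (hθhat_meas : ∀ i, Measurable[𝓖] (θhat i))
    (hL2 : ∀ i, MemLp (fun ω => θhat i ω - (μ[θ i | 𝓖]) ω) 2 μ) :
    ∫ ω, (1 / n : ℝ) * ∑ i, (((if 0 ≤ (μ[θ i | 𝓖]) ω then (1:ℝ) else 0)
          - (if 0 ≤ θhat i ω then (1:ℝ) else 0)) * θ i ω) ∂μ
      ≤ (∫ ω, (1 / n : ℝ) * ∑ i, (θhat i ω - (μ[θ i | 𝓖]) ω) ^ 2 ∂μ) ^ ((1:ℝ)/2) := by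
  have hn' : (0:ℝ) < n := by exact_mod_cast Nat.lt_of_lt_of_le Nat.zero_lt_one hn
  -- abbreviations
  set θs : Fin n → Ω → ℝ := fun i => μ[θ i | 𝓖] with hθs_def
  set F : Fin n → Ω → ℝ := fun i ω =>
    (if 0 ≤ θs i ω then (1:ℝ) else 0) - (if 0 ≤ θhat i ω then (1:ℝ) else 0) with hF_def
  set Y : Ω → ℝ := fun ω => (1 / n : ℝ) * ∑ i, (θhat i ω - θs i ω) ^ 2 with hY_def
  have hθs_meas : ∀ i, StronglyMeasurable[𝓖] (θs i) := fun i => stronglyMeasurable_condExp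
  have hF_meas : ∀ i, StronglyMeasurable[𝓖] (F i) := by
    intro i
    apply Measurable.stronglyMeasurable
    exact Measurable.sub
      (Measurable.ite (measurableSet_le measurable_const (hθs_meas i).measurable)
        measurable_const measurable_const)
      (Measurable.ite (measurableSet_le measurable_const (hθhat_meas i))
        measurable_const measurable_const)
  have hF_bdd : ∀ i ω, ‖F i ω‖ ≤ 2 := by
    intro i ω
    rw [Real.norm_eq_abs, hF_def]
    simp only
    split_ifs <;> norm_num
  have hFθ_int : ∀ i, Integrable (fun ω => F i ω * θ i ω) μ := fun i =>
    (hθ i).bdd_mul ((hF_meas i).mono h𝓖).aestronglyMeasurable (ae_of_all _ (hF_bdd i))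
  have hθs_int : ∀ i, Integrable (θs i) μ := fun i => integrable_condExp
  have hFθs_int : ∀ i, Integrable (fun ω => F i ω * θs i ω) μ := fun i =>
    (hθs_int i).bdd_mul ((hF_meas i).mono h𝓖).aestronglyMeasurable (ae_of_all _ (hF_bdd i))
  -- Step 1: replace θ by its conditional expectation
  have step1 : ∀ i, ∫ ω, F i ω * θ i ω ∂μ = ∫ ω, F i ω * θs i ω ∂μ := by
    intro i
    have h := condExp_mul_of_stronglyMeasurable_left (hF_meas i) (hFθ_int i) (hθ i)
    calc ∫ ω, F i ω * θ i ω ∂μ = ∫ ω, (μ[(fun ω => F i ω * θ i ω) | 𝓖]) ω ∂μ :=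
          (integral_condExp h𝓖).symm
      _ = ∫ ω, F i ω * θs i ω ∂μ := integral_congr_ae h
  -- integrability of Y
  have hd_sq_int : ∀ i, Integrable (fun ω => (θhat i ω - θs i ω) ^ 2) μ := fun i =>
    (memLp_two_iff_integrable_sq (hL2 i).1).mp (hL2 i)
  have hY_int : Integrable Y μ :=
    (integrable_finset_sum Finset.univ fun i _ => hd_sq_int i).const_mul _
  have hY_nonneg : ∀ ω, 0 ≤ Y ω := by
    intro ω; rw [hY_def]
    positivity
  -- sqrt Y
  have hsqY_meas : AEStronglyMeasurable[𝓕] (fun ω => Real.sqrt (Y ω)) μ :=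
    Real.continuous_sqrt.comp_aestronglyMeasurable hY_int.1
  have hsqY_mem2 : MemLp (fun ω => Real.sqrt (Y ω)) 2 μ := by
    rw [memLp_two_iff_integrable_sq hsqY_meas]
    refine hY_int.congr (Filter.Eventually.of_forall fun ω => ?_)
    exact (Real.sq_sqrt (hY_nonneg ω)).symm
  -- pointwise bound
  have hpt : ∀ ω, (1 / n : ℝ) * ∑ i, F i ω * θs i ω ≤ Real.sqrt (Y ω) := by
    intro ω
    have h1 : ∑ i, F i ω * θs i ω ≤ ∑ i, |θhat i ω - θs i ω| :=
      Finset.sum_le_sum fun i _ => ind_diff_mul_le (θs i ω) (θhat i ω)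
    have h2 : (1 / n : ℝ) * ∑ i, |θhat i ω - θs i ω| ≤ Real.sqrt (Y ω) := by
      rw [Real.le_sqrt (by positivity) (hY_nonneg ω)]
      have hcs : (∑ i, |θhat i ω - θs i ω|) ^ 2 ≤ (n:ℝ) * ∑ i, (θhat i ω - θs i ω) ^ 2 := by
        have h := sq_sum_le_card_mul_sum_sq
          (s := Finset.univ) (f := fun i : Fin n => |θhat i ω - θs i ω|)
        simpa [sq_abs] using h
      rw [hY_def, mul_pow]
      calc (1 / n : ℝ) ^ 2 * (∑ i, |θhat i ω - θs i ω|) ^ 2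
          ≤ (1 / n : ℝ) ^ 2 * ((n:ℝ) * ∑ i, (θhat i ω - θs i ω) ^ 2) :=
            mul_le_mul_of_nonneg_left hcs (by positivity)
        _ = (1 / n : ℝ) * ∑ i, (θhat i ω - θs i ω) ^ 2 := by field_simp
    calc (1 / n : ℝ) * ∑ i, F i ω * θs i ω
        ≤ (1 / n : ℝ) * ∑ i, |θhat i ω - θs i ω| :=
          mul_le_mul_of_nonneg_left h1 (by positivity)
      _ ≤ Real.sqrt (Y ω) := h2
  -- Hölder / Cauchy–Schwarz in L²
  have hconj : Real.HolderConjugate 2 2 := Real.HolderConjugate.two_two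
  have holder := integral_mul_le_Lp_mul_Lq_of_nonneg (μ := μ) hconj
    (f := fun ω => Real.sqrt (Y ω)) (g := fun _ => (1:ℝ))
    (Filter.Eventually.of_forall fun ω => Real.sqrt_nonneg _)
    (Filter.Eventually.of_forall fun _ => zero_le_one)
    (by simpa [ENNReal.ofReal_ofNat] using hsqY_mem2)
    (by simpa [ENNReal.ofReal_ofNat] using (memLp_const (1:ℝ) : MemLp (fun _ : Ω => (1:ℝ)) 2 μ))
  have e2 : (fun a : Ω => Real.sqrt (Y a) ^ (2:ℝ)) = Y := by
    funext ω
    rw [show (2:ℝ) = ((2:ℕ):ℝ) by norm_num, Real.rpow_natCast, Real.sq_sqrt (hY_nonneg ω)]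
  have hsq_int : ∫ ω, Real.sqrt (Y ω) ∂μ ≤ (∫ ω, Y ω ∂μ) ^ ((1:ℝ)/2) := by
    simp only [mul_one, Real.one_rpow, integral_const, measure_univ, ENNReal.toReal_one,
      one_smul, smul_eq_mul] at holder
    rw [e2] at holder
    simpa using holder
  -- put everything together
  calc ∫ ω, (1 / n : ℝ) * ∑ i, F i ω * θ i ω ∂μ
      = (1 / n : ℝ) * ∑ i, ∫ ω, F i ω * θ i ω ∂μ := by
        rw [integral_const_mul, integral_finset_sum Finset.univ fun i _ => hFθ_int i]
    _ = (1 / n : ℝ) * ∑ i, ∫ ω, F i ω * θs i ω ∂μ := by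
        congr 1; exact Finset.sum_congr rfl fun i _ => step1 i
    _ = ∫ ω, (1 / n : ℝ) * ∑ i, F i ω * θs i ω ∂μ := by
        rw [integral_const_mul, integral_finset_sum Finset.univ fun i _ => hFθs_int i]
    _ ≤ ∫ ω, Real.sqrt (Y ω) ∂μ := by
        refine integral_mono ?_ (hsqY_mem2.integrable one_le_two)
          (fun ω => hpt ω)
        exact (integrable_finset_sum Finset.univ fun i _ => hFθs_int i).const_mul _
    _ ≤ (∫ ω, Y ω ∂μ) ^ ((1:ℝ)/2) := hsq_int
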